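/- Let p > 1, ρ0 > 0, Λ ≥ 0, let a : (0,ρ0) → (0,∞) be measurable with ∫_0^{ρ0} a(ζ)^{-1/(p-1)} dζ < ∞, let A > ∫_0^{ρ0} e^{Λτ} a(τ)^{-1/(p-1)} dτ, and define h(y) := e^{-Λy} (A - ∫_0^y e^{Λτ} a(τ)^{-1/(p-1)} dτ) for y ∈ [0,ρ0]. Then: (a) h is continuous and h(y) > 0 for all y ∈ [0,ρ0]; (b) for almost every y ∈ (0,ρ0), a(y)·(ψ'(y))^{p-1} = h(y), where ψ'(y) = e^{-Λy/(p-1)} a(y)^{-1/(p-1)} (A - ∫_0^y e^{Λτ} a(τ)^{-1/(p-1)} dτ)^{1/(p-1)}; (c) for almost every y ∈ (0,ρ0), h is differentiable at y and -h'(y) - Λ h(y) = a(y)^{-1/(p-1)}. -/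

import Mathlib

open MeasureTheory Set Metric Filter

lemma aux_ftc {g : ℝ → ℝ} (hg : Integrable g (volume : Measure ℝ)) :
    ∀ᵐ x : ℝ, HasDerivAt (fun y => ∫ t in (0:ℝ)..y, g t) (g x) x := by
  filter_upwards [IsUnifLocDoublingMeasure.ae_tendsto_average_norm_sub (μ := volume)
    hg.locallyIntegrable 1] with x hx
  rw [hasDerivAt_iff_tendsto_slope, tendsto_iff_norm_sub_tendsto_zero]
  have hav : Tendsto (fun y : ℝ => ⨍ t in closedBall x |y - x|, ‖g t - g x‖)
      (nhdsWithin x {x}ᶜ) (nhds 0) := by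
    apply hx (fun _ => x) (fun y => |y - x|)
    · rw [tendsto_nhdsWithin_iff]
      constructor
      · have : Tendsto (fun y : ℝ => |y - x|) (nhds x) (nhds |x - x|) :=
          ((continuous_id.sub continuous_const).abs).tendsto x
        simpa using this.mono_left nhdsWithin_le_nhds
      · filter_upwards [self_mem_nhdsWithin] with y hy
        simpa [sub_eq_zero] using hy
    · filter_upwards with y
      exact mem_closedBall_self (by positivity)
  apply squeeze_zero' (Filter.Eventually.of_forall fun y => norm_nonneg _)
    _ (by simpa using hav.const_mul 2)
  filter_upwards [self_mem_nhdsWithin] with y hy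
  have hyx : y ≠ x := hy
  have hr : (0:ℝ) < |y - x| := abs_pos.mpr (sub_ne_zero.mpr hyx)
  have hFint : IntervalIntegrable g volume x y := hg.intervalIntegrable
  have e0 : ∫ t in x..y, (g t - g x) =
      ((∫ t in (0:ℝ)..y, g t) - ∫ t in (0:ℝ)..x, g t) - (y - x) * g x := by
    rw [intervalIntegral.integral_sub hFint (intervalIntegrable_const),
      intervalIntegral.integral_interval_sub_left hg.intervalIntegrable hg.intervalIntegrable,
      intervalIntegral.integral_const, smul_eq_mul]
  have e1 : slope (fun y => ∫ t in (0:ℝ)..y, g t) x y - g x =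
      (∫ t in x..y, (g t - g x)) / (y - x) := by
    rw [slope_def_field, e0]
    have hne : y - x ≠ 0 := sub_ne_zero.mpr hyx
    field_simp
  rw [e1]
  have hIsub : uIoc x y ⊆ closedBall x |y - x| := by
    intro t ht
    rw [mem_closedBall, Real.dist_eq]
    rcases le_total x y with h | h
    · rw [uIoc_of_le h] at ht
      rw [abs_of_nonneg (sub_nonneg.mpr h)]
      rw [abs_le]; constructor <;> [linarith [ht.1]; linarith [ht.2]]
    · rw [uIoc_of_ge h] at ht
      rw [abs_of_nonpos (sub_nonpos.mpr h), abs_le]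
      constructor <;> [linarith [ht.1]; linarith [ht.2]]
  have hcbInt : IntegrableOn (fun t => ‖g t - g x‖) (closedBall x |y - x|) := by
    apply Integrable.norm
    exact hg.integrableOn.sub (integrableOn_const (measure_closedBall_lt_top.ne))
  have h2 : ∫ t in uIoc x y, ‖g t - g x‖ ≤ ∫ t in closedBall x |y - x|, ‖g t - g x‖ :=
    setIntegral_mono_set hcbInt (Filter.Eventually.of_forall fun t => norm_nonneg _)
      (HasSubset.Subset.eventuallyLE hIsub)
  have h3 : ∫ t in closedBall x |y - x|, ‖g t - g x‖ =
      (2 * |y - x|) * ⨍ t in closedBall x |y - x|, ‖g t - g x‖ := by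
    rw [setAverage_eq, smul_eq_mul, ← mul_assoc]
    rw [Real.volume_real_closedBall (by positivity)]
    field_simp
  have hb : ‖(∫ t in x..y, (g t - g x)) / (y - x)‖ ≤
      2 * ⨍ t in closedBall x |y - x|, ‖g t - g x‖ := by
    rw [norm_div, Real.norm_eq_abs (y - x), div_le_iff₀ hr]
    calc ‖∫ t in x..y, (g t - g x)‖ ≤ ∫ t in uIoc x y, ‖g t - g x‖ :=
          intervalIntegral.norm_integral_le_integral_norm_uIoc
      _ ≤ ∫ t in closedBall x |y - x|, ‖g t - g x‖ := h2
      _ = (2 * |y - x|) * ⨍ t in closedBall x |y - x|, ‖g t - g x‖ := h3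
      _ = 2 * (⨍ t in closedBall x |y - x|, ‖g t - g x‖) * |y - x| := by ring
  exact hb


/-- The weighted flux `h(y) = e^{-Λy} (A - ∫_0^y e^{Λτ} a(τ)^{-1/(p-1)} dτ)` of the
one-dimensional supersolution profile. -/
noncomputable def fluxProf (p Λ A : ℝ) (a : ℝ → ℝ) (y : ℝ) : ℝ :=
  Real.exp (-Λ * y) * (A - ∫ τ in (0:ℝ)..y, Real.exp (Λ * τ) * a τ ^ (-(1 / (p - 1))))

/-- (a) `h` is continuous and positive on `[0,ρ0]`; (b) for a.e. `y ∈ (0,ρ0)`,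
`a(y) (ψ'(y))^{p-1} = h(y)` with the explicit formula for `ψ'`; (c) for a.e. `y ∈ (0,ρ0)`,
`h` is differentiable at `y` and `-h'(y) - Λ h(y) = a(y)^{-1/(p-1)}`. -/
theorem stmt_8 (p ρ0 Λ A : ℝ) (hp : 1 < p) (hρ : 0 < ρ0) (hΛ : 0 ≤ Λ)
    (a : ℝ → ℝ) (ha_meas : Measurable a) (ha_pos : ∀ ζ ∈ Ioo (0:ℝ) ρ0, 0 < a ζ)
    (hint : IntegrableOn (fun ζ => a ζ ^ (-(1 / (p - 1)))) (Ioo (0:ℝ) ρ0))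
    (hA : (∫ τ in (0:ℝ)..ρ0, Real.exp (Λ * τ) * a τ ^ (-(1 / (p - 1)))) < A) :
    (ContinuousOn (fluxProf p Λ A a) (Icc 0 ρ0) ∧
      ∀ y ∈ Icc (0:ℝ) ρ0, 0 < fluxProf p Λ A a y) ∧
    (∀ᵐ y ∂(volume.restrict (Ioo (0:ℝ) ρ0)),
      a y * (Real.exp (-Λ * y / (p - 1)) * a y ^ (-(1 / (p - 1))) *
        (A - ∫ τ in (0:ℝ)..y, Real.exp (Λ * τ) * a τ ^ (-(1 / (p - 1)))) ^ (1 / (p - 1)))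
          ^ (p - 1) = fluxProf p Λ A a y) ∧
    (∀ᵐ y ∂(volume.restrict (Ioo (0:ℝ) ρ0)),
      ∃ d : ℝ, HasDerivAt (fluxProf p Λ A a) d y ∧
        -d - Λ * fluxProf p Λ A a y = a y ^ (-(1 / (p - 1)))) := by
  have hq : (0:ℝ) < p - 1 := by linarith
  set g : ℝ → ℝ := fun τ => Real.exp (Λ * τ) * a τ ^ (-(1 / (p - 1))) with hg_def
  -- integrability of g on Ioo 0 ρ0
  have hg_meas : Measurable g :=
    (Real.measurable_exp.comp (measurable_const.mul measurable_id)).mul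
      (ha_meas.pow_const _)
  have hgint : IntegrableOn g (Ioo 0 ρ0) := by
    apply Integrable.mono' ((hint.norm).const_mul (Real.exp (Λ * ρ0)))
      hg_meas.aestronglyMeasurable.restrict
    filter_upwards [ae_restrict_mem measurableSet_Ioo] with τ hτ
    have h1 : Real.exp (Λ * τ) ≤ Real.exp (Λ * ρ0) :=
      Real.exp_le_exp.mpr (mul_le_mul_of_nonneg_left hτ.2.le hΛ)
    calc ‖g τ‖ = Real.exp (Λ * τ) * ‖a τ ^ (-(1 / (p - 1)))‖ := by
          rw [norm_mul, Real.norm_eq_abs, abs_of_pos (Real.exp_pos _)]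
      _ ≤ Real.exp (Λ * ρ0) * ‖a τ ^ (-(1 / (p - 1)))‖ :=
          mul_le_mul_of_nonneg_right h1 (norm_nonneg _)
  set G : ℝ → ℝ := (Ioo (0:ℝ) ρ0).indicator g with hG_def
  have hG : Integrable G := (integrable_indicator_iff measurableSet_Ioo).mpr hgint
  have hGnn : ∀ t, 0 ≤ G t := by
    intro t
    apply indicator_nonneg
    intro τ hτ
    exact mul_nonneg (Real.exp_pos _).le (Real.rpow_nonneg (ha_pos τ hτ).le _)
  -- g and G have the same primitive on Icc 0 ρ0
  have hFeq : ∀ y ∈ Icc (0:ℝ) ρ0,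
      (∫ t in (0:ℝ)..y, g t) = ∫ t in (0:ℝ)..y, G t := by
    intro y hy
    apply intervalIntegral.integral_congr_ae
    have hρae : ∀ᵐ t : ℝ, t ≠ ρ0 := by
      have h0 : (volume : Measure ℝ) {ρ0} = 0 := measure_singleton ρ0
      rw [ae_iff]
      simpa using h0
    filter_upwards [hρae] with t ht hmem
    rw [uIoc_of_le hy.1] at hmem
    have htIoo : t ∈ Ioo (0:ℝ) ρ0 :=
      ⟨hmem.1, lt_of_le_of_ne (hmem.2.trans hy.2) ht⟩
    rw [hG_def, indicator_of_mem htIoo]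
  -- positivity of A - primitive
  have hc : ∀ y ∈ Icc (0:ℝ) ρ0, 0 < A - ∫ t in (0:ℝ)..y, g t := by
    intro y hy
    have h1 : (∫ t in (0:ℝ)..ρ0, G t) - ∫ t in (0:ℝ)..y, G t = ∫ t in y..ρ0, G t :=
      intervalIntegral.integral_interval_sub_left hG.intervalIntegrable
        hG.intervalIntegrable
    have h2 : 0 ≤ ∫ t in y..ρ0, G t :=
      intervalIntegral.integral_nonneg hy.2 fun t _ => hGnn t
    have h3 : (∫ t in (0:ℝ)..ρ0, g t) = ∫ t in (0:ℝ)..ρ0, G t :=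
      hFeq ρ0 ⟨hρ.le, le_refl _⟩
    rw [hFeq y hy]
    have : (∫ t in (0:ℝ)..ρ0, G t) < A := by rw [← h3]; exact hA
    linarith
  have hpos : ∀ y ∈ Icc (0:ℝ) ρ0, 0 < fluxProf p Λ A a y := fun y hy =>
    mul_pos (Real.exp_pos _) (hc y hy)
  refine ⟨⟨?_, hpos⟩, ?_, ?_⟩
  · -- continuity
    have hcont : Continuous fun y : ℝ => Real.exp (-Λ * y) * (A - ∫ t in (0:ℝ)..y, G t) :=
      (Real.continuous_exp.comp (continuous_const.mul continuous_id)).mul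
        (continuous_const.sub
          (intervalIntegral.continuous_primitive (fun a b => hG.intervalIntegrable) 0))
    apply hcont.continuousOn.congr
    intro y hy
    show fluxProf p Λ A a y = _
    rw [fluxProf, hFeq y hy]
  · -- part (b)
    filter_upwards [ae_restrict_mem measurableSet_Ioo] with y hy
    have hb : 0 < a y := ha_pos y hy
    have hcy : 0 < A - ∫ t in (0:ℝ)..y, g t := hc y (Ioo_subset_Icc_self hy)
    set c : ℝ := A - ∫ t in (0:ℝ)..y, g t with hc_def
    have e1 : Real.exp (-Λ * y / (p - 1)) ^ (p - 1) = Real.exp (-Λ * y) := by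
      rw [← Real.exp_mul]
      congr 1
      field_simp
    have e3 : (c ^ (1 / (p - 1))) ^ (p - 1) = c := by
      rw [← Real.rpow_mul hcy.le, one_div, inv_mul_cancel₀ (ne_of_gt hq), Real.rpow_one]
    rw [Real.mul_rpow (mul_nonneg (Real.exp_pos _).le (Real.rpow_nonneg hb.le _))
        (Real.rpow_nonneg hcy.le _),
      Real.mul_rpow (Real.exp_pos _).le (Real.rpow_nonneg hb.le _), e1, e3]
    have e2' : (a y ^ (-(1 / (p - 1)))) ^ (p - 1) = (a y)⁻¹ := by
      rw [← Real.rpow_mul hb.le]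
      have : -(1 / (p - 1)) * (p - 1) = -1 := by field_simp
      rw [this, Real.rpow_neg_one]
    rw [e2']
    show a y * (Real.exp (-Λ * y) * (a y)⁻¹ * c) = fluxProf p Λ A a y
    rw [fluxProf, ← hc_def]
    field_simp
  · -- part (c)
    filter_upwards [ae_restrict_mem measurableSet_Ioo, ae_restrict_of_ae (aux_ftc hG)]
      with y hy hD
    have hyIcc : y ∈ Icc (0:ℝ) ρ0 := Ioo_subset_Icc_self hy
    have h1 : HasDerivAt (fun z => Real.exp (-Λ * z)) (Real.exp (-Λ * y) * -Λ) y := by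
      have := ((hasDerivAt_id y).const_mul (-Λ)).exp
      simpa using this
    have h2 : HasDerivAt (fun z => A - ∫ t in (0:ℝ)..z, G t) (-(G y)) y :=
      by simpa using hD.const_sub A
    have hprod := h1.mul h2
    have heq : fluxProf p Λ A a =ᶠ[nhds y]
        fun z => Real.exp (-Λ * z) * (A - ∫ t in (0:ℝ)..z, G t) := by
      filter_upwards [isOpen_Ioo.mem_nhds hy] with z hz
      rw [fluxProf, hFeq z (Ioo_subset_Icc_self hz)]
    have hD' := (HasDerivAt.congr_of_eventuallyEq hprod heq)
    refine ⟨_, hD', ?_⟩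
    have hflux : fluxProf p Λ A a y = Real.exp (-Λ * y) * (A - ∫ t in (0:ℝ)..y, G t) := by
      rw [fluxProf, hFeq y hyIcc]
    rw [hflux]
    have hGy : G y = Real.exp (Λ * y) * a y ^ (-(1 / (p - 1))) := by
      rw [hG_def, indicator_of_mem hy]
    have hexp : Real.exp (-Λ * y) * Real.exp (Λ * y) = 1 := by
      rw [← Real.exp_add]; simp
    have : -(Real.exp (-Λ * y) * -Λ * (A - ∫ t in (0:ℝ)..y, G t) +
        Real.exp (-Λ * y) * -(G y)) -
        Λ * (Real.exp (-Λ * y) * (A - ∫ t in (0:ℝ)..y, G t)) =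
        Real.exp (-Λ * y) * G y := by ring
    rw [this, hGy, ← mul_assoc, hexp, one_mul]
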